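/- The algebraic degree of the n-variable majority function Maj_n is 2^⌊log₂ n⌋. -/

import Mathlib

abbrev BF (n : ℕ) := (Fin n → ZMod 2) → ZMod 2

/-- Hamming weight of a vector in `F₂ⁿ`. -/
def wtv {n : ℕ} (x : Fin n → ZMod 2) : ℕ :=
  (Finset.univ.filter fun i => x i = 1).card

/-- ANF coefficient `a_α = ⊕_{z ≤ α} f(z)`. -/
def anf {n : ℕ} (f : BF n) (α : Fin n → ZMod 2) : ZMod 2 :=
  ∑ z ∈ Finset.univ.filter (fun z : Fin n → ZMod 2 => ∀ i, z i = 1 → α i = 1), f z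

/-- Algebraic degree: the maximum weight of `α` with nonzero ANF coefficient
(0 for the zero function). -/
def degBF {n : ℕ} (f : BF n) : ℕ :=
  (Finset.univ.filter fun α => anf f α ≠ 0).sup wtv

/-- Algebraic immunity: minimum degree of a nonzero annihilator of `f` or of `1 ⊕ f`. -/
noncomputable def AI {n : ℕ} (f : BF n) : ℕ :=
  sInf {d : ℕ | ∃ g : BF n, g ≠ 0 ∧ degBF g = d ∧
    ((∀ x, g x * f x = 0) ∨ (∀ x, g x * (1 + f x) = 0))}

/-- The n-variable majority function: 1 iff the weight exceeds ⌊n/2⌋. -/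
def majF (n : ℕ) : BF n := fun x => if n / 2 < wtv x then 1 else 0


-- Lucas-type parity lemmas
lemma lucasC (L : ℕ) : ∀ t, t < 2^L → Nat.choose (2^L - 1) t % 2 = 1 := by
  induction L with
  | zero => intro t ht; interval_cases t; rfl
  | succ L ih =>
    intro t ht
    haveI : Fact (Nat.Prime 2) := ⟨Nat.prime_two⟩
    have h := (Choose.choose_modEq_choose_mod_mul_choose_div_nat
      (p := 2) (n := 2^(L+1) - 1) (k := t))
    have h2 : 2^(L+1) = 2 * 2^L := by ring
    have hm : (2^(L+1) - 1) % 2 = 1 := by omega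
    have hd : (2^(L+1) - 1) / 2 = 2^L - 1 := by omega
    rw [hm, hd] at h
    have h1 : Nat.choose 1 (t % 2) = 1 := by
      rcases Nat.mod_two_eq_zero_or_one t with h' | h' <;> rw [h'] <;> rfl
    rw [h1, one_mul] at h
    have := ih (t / 2) (by omega)
    unfold Nat.ModEq at h
    omega

lemma lucasD (L : ℕ) : ∀ s t, s < t → t < 2^L → Nat.choose (2^L + s) t % 2 = 0 := by
  induction L with
  | zero => intro s t hst ht; omega
  | succ L ih =>
    intro s t hst ht
    haveI : Fact (Nat.Prime 2) := ⟨Nat.prime_two⟩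
    have h := (Choose.choose_modEq_choose_mod_mul_choose_div_nat
      (p := 2) (n := 2^(L+1) + s) (k := t))
    have h2 : 2^(L+1) = 2 * 2^L := by ring
    have hm : (2^(L+1) + s) % 2 = s % 2 := by omega
    have hd : (2^(L+1) + s) / 2 = 2^L + s / 2 := by omega
    rw [hm, hd] at h
    unfold Nat.ModEq at h
    rcases Nat.lt_or_ge (s / 2) (t / 2) with hc | hc
    · have := ih (s / 2) (t / 2) hc (by omega)
      rw [Nat.mul_mod, this, mul_zero] at h
      simpa using h
    · have hs2 : s % 2 = 0 ∧ t % 2 = 1 := by omega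
      rw [hs2.1, hs2.2] at h
      simpa using h

-- parity of partial binomial sum
lemma sum_parity (t k : ℕ) :
    ((∑ j ∈ Finset.Ico (t+1) (k+1+1), (k+1).choose j : ℕ) : ZMod 2)
      = ((k.choose t : ℕ) : ZMod 2) := by
  rcases Nat.lt_or_ge k t with h | h
  · rw [Finset.Ico_eq_empty (by omega), Nat.choose_eq_zero_of_lt h]
    simp
  · push_cast
    rw [Finset.sum_Ico_eq_sum_range]
    have hr : k + 1 + 1 - (t + 1) = (k - t) + 1 := by omega
    rw [hr]
    have step : ∀ i ∈ Finset.range (k - t + 1),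
        ((Nat.choose (k+1) (t + 1 + i) : ZMod 2))
          = (fun i => ((k.choose (t + i) : ZMod 2))) (i+1)
            - (fun i => ((k.choose (t + i) : ZMod 2))) i := by
      intro i _
      have : t + 1 + i = (t + i) + 1 := by omega
      rw [this, Nat.choose_succ_succ']
      show _ = (k.choose (t + (i+1)) : ZMod 2) - (k.choose (t + i) : ZMod 2)
      push_cast
      rw [CharTwo.sub_eq_add]
      have ht2 : t + (i + 1) = t + i + 1 := by omega
      rw [ht2]
      ring
    rw [Finset.sum_congr rfl step]
    rw [Finset.sum_range_sub (fun i => ((k.choose (t + i) : ZMod 2))) (k - t + 1)]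
    have : t + (k - t + 1) = k + 1 := by omega
    rw [this, Nat.choose_succ_self]
    simp [CharTwo.sub_eq_add]

lemma zmod2_em (x : ZMod 2) : x = 0 ∨ x = 1 := by revert x; decide

lemma anf_majF (n : ℕ) (α : Fin n → ZMod 2) :
    anf (majF n) α
      = ((∑ j ∈ Finset.Ico (n/2+1) (wtv α + 1), (wtv α).choose j : ℕ) : ZMod 2) := by
  classical
  unfold anf majF
  rw [Finset.sum_boole, Finset.filter_filter]
  congr 1
  set A := Finset.univ.filter (fun i => α i = 1) with hA
  have h1 : (Finset.univ.filter fun z : Fin n → ZMod 2 =>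
        (∀ i, z i = 1 → α i = 1) ∧ n/2 < wtv z).card
      = (A.powerset.filter fun S => n/2 < S.card).card := by
    apply Finset.card_nbij'
      (i := fun z => Finset.univ.filter fun i => z i = 1)
      (j := fun S => fun i => if i ∈ S then 1 else 0)
    · intro z hz
      rw [Finset.mem_coe, Finset.mem_filter] at hz ⊢
      refine ⟨Finset.mem_powerset.mpr ?_, hz.2.2⟩
      intro i hi
      rw [Finset.mem_filter] at hi
      rw [hA, Finset.mem_filter]
      exact ⟨Finset.mem_univ _, hz.2.1 i hi.2⟩
    · intro S hS
      rw [Finset.mem_coe, Finset.mem_filter] at hS ⊢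
      refine ⟨Finset.mem_univ _, ?_, ?_⟩
      · intro i hi
        by_cases hthey : i ∈ S
        · have : i ∈ A := Finset.mem_powerset.mp hS.1 hthey
          rw [hA, Finset.mem_filter] at this
          exact this.2
        · have hi' : (if i ∈ S then (1 : ZMod 2) else 0) = 1 := hi
          rw [if_neg hthey] at hi'
          exact absurd hi' (by decide)
      · have : (Finset.univ.filter fun i => (if i ∈ S then (1 : ZMod 2) else 0) = 1) = S := by
          ext i
          simp only [Finset.mem_filter, Finset.mem_univ, true_and]
          constructor
          · intro h
            by_contra hc
            rw [if_neg hc] at h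
            exact absurd h (by decide)
          · intro h; rw [if_pos h]
        show n / 2 < wtv _
        unfold wtv
        rw [this]
        exact hS.2
    · intro z hz
      funext i
      by_cases h : z i = 1
      · simp [h]
      · have h0 : z i = 0 := by rcases zmod2_em (z i) with h' | h'; exact h'; exact absurd h' h
        simp [h, h0]
    · intro S hS
      ext i
      simp only [Finset.mem_filter, Finset.mem_univ, true_and]
      constructor
      · intro h
        by_contra hc
        rw [if_neg hc] at h
        exact absurd h (by decide)
      · intro h; rw [if_pos h]
  have hwA : A.card = wtv α := rfl
  have h2 : A.powerset.filter (fun S => n/2 < S.card)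
      = (Finset.Ico (n/2+1) (A.card+1)).biUnion (fun j => A.powersetCard j) := by
    ext S
    simp only [Finset.mem_filter, Finset.mem_powerset, Finset.mem_biUnion, Finset.mem_Ico,
      Finset.mem_powersetCard]
    constructor
    · rintro ⟨hS, hc⟩
      exact ⟨S.card, ⟨hc, Nat.lt_succ_of_le (Finset.card_le_card hS)⟩, hS, rfl⟩
    · rintro ⟨j, ⟨hj1, _⟩, hS, rfl⟩
      exact ⟨hS, hj1⟩
  rw [h1, h2, Finset.card_biUnion (fun x _ y _ hxy =>
    Finset.pairwise_disjoint_powersetCard A hxy), ← hwA]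
  exact Finset.sum_congr rfl fun j _ => Finset.card_powersetCard j A

lemma card_fin_lt (n m : ℕ) (h : m ≤ n) (hn : 0 < n) :
    (Finset.univ.filter fun i : Fin n => (i : ℕ) < m).card = m := by
  have key : (Finset.univ.filter fun i : Fin n => (i : ℕ) < m).card
      = (Finset.range m).card := by
    apply Finset.card_nbij' (i := fun i : Fin n => (i : ℕ))
      (j := fun j => (⟨j % n, Nat.mod_lt _ hn⟩ : Fin n))
    · intro a ha
      rw [Finset.mem_coe, Finset.mem_filter] at ha
      rw [Finset.mem_coe, Finset.mem_range]
      exact ha.2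
    · intro a ha
      rw [Finset.mem_coe, Finset.mem_range] at ha
      rw [Finset.mem_coe, Finset.mem_filter]
      refine ⟨Finset.mem_univ _, ?_⟩
      show a % n < m
      rw [Nat.mod_eq_of_lt (lt_of_lt_of_le ha h)]
      exact ha
    · intro a ha
      exact Fin.ext (Nat.mod_eq_of_lt a.isLt)
    · intro a ha
      rw [Finset.mem_coe, Finset.mem_range] at ha
      show a % n = a
      exact Nat.mod_eq_of_lt (lt_of_lt_of_le ha h)
  rw [key, Finset.card_range]

lemma deg_maj' (n : ℕ) (hn : 1 ≤ n) : degBF (majF n) = 2 ^ Nat.log 2 n := by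
  classical
  set m := 2 ^ Nat.log 2 n with hm
  have hm1 : m ≤ n := Nat.pow_log_le_self 2 (by omega)
  have hm2 : n < 2 * m := by
    have h := Nat.lt_pow_succ_log_self (by norm_num : 1 < 2) n
    rw [pow_succ] at h
    omega
  have hmpos : 1 ≤ m := Nat.one_le_two_pow
  apply le_antisymm
  · apply Finset.sup_le
    intro α hα
    rw [Finset.mem_filter] at hα
    by_contra hk
    push_neg at hk
    have hkn : wtv α ≤ n := by
      have h := Finset.card_filter_le Finset.univ (fun i : Fin n => α i = 1)
      simpa [wtv] using h
    obtain ⟨k', hk'⟩ : ∃ k', wtv α = k' + 1 := ⟨wtv α - 1, by omega⟩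
    have hco := anf_majF n α
    rw [hk', sum_parity] at hco
    have heven := lucasD (Nat.log 2 n) (k' - m) (n / 2) (by omega) (by omega)
    rw [← hm] at heven
    have hs : k' = m + (k' - m) := by omega
    rw [hs] at hco
    apply hα.2
    rw [hco, ZMod.natCast_eq_zero_iff]
    omega
  · set α₀ : Fin n → ZMod 2 := fun i => if (i : ℕ) < m then 1 else 0 with hα₀
    have hw : wtv α₀ = m := by
      show (Finset.univ.filter fun i : Fin n => α₀ i = 1).card = m
      have hfe : (Finset.univ.filter fun i : Fin n => α₀ i = 1)
          = Finset.univ.filter fun i : Fin n => (i : ℕ) < m := by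
        apply Finset.filter_congr
        intro i _
        rw [hα₀]
        constructor
        · intro h
          by_contra hc
          have h' : (if (i : ℕ) < m then (1 : ZMod 2) else 0) = 1 := h
          rw [if_neg hc] at h'
          exact absurd h' (by decide)
        · intro h
          show (if (i : ℕ) < m then (1 : ZMod 2) else 0) = 1
          rw [if_pos h]
      rw [hfe, card_fin_lt n m hm1 (by omega)]
    have hne : anf (majF n) α₀ ≠ 0 := by
      have hco := anf_majF n α₀
      rw [hw] at hco
      obtain ⟨m', hm'⟩ : ∃ m', m = m' + 1 := ⟨m - 1, by omega⟩
      rw [hm', sum_parity] at hco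
      have hodd := lucasC (Nat.log 2 n) (n / 2) (by omega)
      rw [← hm] at hodd
      have hm'' : m' = m - 1 := by omega
      rw [hco]
      intro h0
      rw [ZMod.natCast_eq_zero_iff] at h0
      rw [hm''] at h0
      omega
    have hmem : α₀ ∈ Finset.univ.filter fun α => anf (majF n) α ≠ 0 :=
      Finset.mem_filter.mpr ⟨Finset.mem_univ _, hne⟩
    have := Finset.le_sup (f := wtv) hmem
    rw [hw] at this
    exact this

/-- The algebraic degree of Maj_n is 2^⌊log₂ n⌋. -/
theorem deg_maj (n : ℕ) (hn : 1 ≤ n) : degBF (majF n) = 2 ^ Nat.log 2 n := by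
  exact deg_maj' n hn
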